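/- arXiv:1810.03743 — 4 statements merged into one kernel-verified Lean document; each statement's English description precedes it below -/
import Mathlib

section
/- Let A ∈ ℝ^{m×n} and let B = {B₁,...,B_M} be a partition of the column indices {1,...,n}. Then every vector x ∈ ℝⁿ that is s-block sparse with respect to B is the unique minimizer of ‖w‖_{1,2|B} over all w ∈ ℝⁿ with Aw = Ax, if and only if A satisfies the block null space property of order s: for every v ∈ Null(A) \ {0} and every set S ⊆ {1,...,M} with |S| ≤ s, Σ_{i∈S} ‖v[B_i]‖₂ < Σ_{i∉S} ‖v[B_i]‖₂. -/
noncomputable section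

def evec {n : ℕ} (t : Finset (Fin n)) (v : Fin n → ℝ) : EuclideanSpace ℝ t := WithLp.toLp 2 (fun j => v j)

lemma sqrt_sum_sq_eq_norm {n : ℕ} (t : Finset (Fin n)) (v : Fin n → ℝ) :
    Real.sqrt (∑ j ∈ t, v j ^ 2) = ‖evec t v‖ := by
  rw [EuclideanSpace.norm_eq]
  congr 1
  rw [← Finset.sum_attach t (fun j => v j ^ 2)]
  exact Finset.sum_congr rfl fun j _ => by rw [Real.norm_eq_abs, sq_abs]; rfl

lemma sqrt_sum_sq_add_le {n : ℕ} (t : Finset (Fin n)) (a b : Fin n → ℝ) :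
    Real.sqrt (∑ j ∈ t, (a j + b j) ^ 2) ≤
      Real.sqrt (∑ j ∈ t, a j ^ 2) + Real.sqrt (∑ j ∈ t, b j ^ 2) := by
  rw [sqrt_sum_sq_eq_norm t (fun j => a j + b j), sqrt_sum_sq_eq_norm t a,
    sqrt_sum_sq_eq_norm t b]
  exact norm_add_le (evec t a) (evec t b)

/-- The mixed ℓ_{1,2|B} norm of `v` with respect to the block partition `B`. -/
def blockNorm {n M : ℕ} (B : Fin M → Finset (Fin n)) (v : Fin n → ℝ) : ℝ :=
  ∑ i, Real.sqrt (∑ j ∈ B i, v j ^ 2)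

/-- `v` is `s`-block sparse with respect to `B`: at most `s` blocks are nonzero. -/
def BlockSparse {n M : ℕ} (B : Fin M → Finset (Fin n)) (s : ℕ) (v : Fin n → ℝ) : Prop :=
  {i : Fin M | ∃ j ∈ B i, v j ≠ 0}.ncard ≤ s

theorem stmt0 {m n M : ℕ} (A : Matrix (Fin m) (Fin n) ℝ)
    (B : Fin M → Finset (Fin n))
    (hdisj : ∀ i j, i ≠ j → Disjoint (B i) (B j))
    (hcover : ∀ k : Fin n, ∃ i, k ∈ B i) (s : ℕ) :
    (∀ x : Fin n → ℝ, BlockSparse B s x →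
      ∀ w : Fin n → ℝ, A.mulVec w = A.mulVec x → w ≠ x →
        blockNorm B x < blockNorm B w)
    ↔
    (∀ v : Fin n → ℝ, A.mulVec v = 0 → v ≠ 0 →
      ∀ S : Finset (Fin M), S.card ≤ s →
        ∑ i ∈ S, Real.sqrt (∑ j ∈ B i, v j ^ 2) <
        ∑ i ∈ Sᶜ, Real.sqrt (∑ j ∈ B i, v j ^ 2)) := by
  classical
  have huniq : ∀ {i i' : Fin M} {j : Fin n}, j ∈ B i → j ∈ B i' → i = i' := by
    intro i i' j h h'
    by_contra hne
    exact Finset.disjoint_left.mp (hdisj i i' hne) h h'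
  constructor
  · -- recovery → NSP
    intro H v hAv hv0 S hS
    set x : Fin n → ℝ := fun j => if ∃ i ∈ S, j ∈ B i then v j else 0 with hxdef
    have hxS : BlockSparse B s x := by
      have hsub : {i : Fin M | ∃ j ∈ B i, x j ≠ 0} ⊆ (↑S : Set (Fin M)) := by
        intro i hi
        obtain ⟨j, hjB, hj0⟩ := hi
        simp only [hxdef] at hj0
        by_cases hc : ∃ i' ∈ S, j ∈ B i'
        · obtain ⟨i', hi', hjB'⟩ := hc
          exact (huniq hjB hjB') ▸ hi'
        · simp [hc] at hj0
      have hle := Set.ncard_le_ncard hsub (Set.toFinite _)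
      rw [Set.ncard_coe_finset] at hle
      exact le_trans hle hS
    set w : Fin n → ℝ := x - v with hwdef
    have hAw : A.mulVec w = A.mulVec x := by
      rw [hwdef, Matrix.mulVec_sub, hAv, sub_zero]
    have hwx : w ≠ x := by
      intro h
      apply hv0
      have := sub_eq_self.mp (hwdef ▸ h)
      exact this
    have hx_in : ∀ i ∈ S, ∀ j ∈ B i, x j = v j := by
      intro i hi j hj
      simp only [hxdef]
      rw [if_pos ⟨i, hi, hj⟩]
    have hx_out : ∀ i ∈ Sᶜ, ∀ j ∈ B i, x j = 0 := by
      intro i hi j hj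
      simp only [hxdef]
      rw [if_neg]
      rintro ⟨i', hi', hjB'⟩
      exact (Finset.mem_compl.mp hi) ((huniq hj hjB') ▸ hi')
    have key := H x hxS w hAw hwx
    have hbx : blockNorm B x = ∑ i ∈ S, Real.sqrt (∑ j ∈ B i, v j ^ 2) := by
      rw [blockNorm, ← Finset.sum_add_sum_compl S]
      have h1 : ∑ i ∈ S, Real.sqrt (∑ j ∈ B i, x j ^ 2)
          = ∑ i ∈ S, Real.sqrt (∑ j ∈ B i, v j ^ 2) :=
        Finset.sum_congr rfl fun i hi => by
          congr 1; exact Finset.sum_congr rfl fun j hj => by rw [hx_in i hi j hj]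
      have h2 : ∑ i ∈ Sᶜ, Real.sqrt (∑ j ∈ B i, x j ^ 2) = 0 := by
        refine Finset.sum_eq_zero fun i hi => ?_
        have : ∑ j ∈ B i, x j ^ 2 = 0 :=
          Finset.sum_eq_zero fun j hj => by rw [hx_out i hi j hj]; ring
        rw [this, Real.sqrt_zero]
      rw [h1, h2, add_zero]
    have hbw : blockNorm B w = ∑ i ∈ Sᶜ, Real.sqrt (∑ j ∈ B i, v j ^ 2) := by
      rw [blockNorm, ← Finset.sum_add_sum_compl S]
      have h1 : ∑ i ∈ S, Real.sqrt (∑ j ∈ B i, w j ^ 2) = 0 := by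
        refine Finset.sum_eq_zero fun i hi => ?_
        have : ∑ j ∈ B i, w j ^ 2 = 0 :=
          Finset.sum_eq_zero fun j hj => by
            simp only [hwdef, Pi.sub_apply, hx_in i hi j hj]; ring
        rw [this, Real.sqrt_zero]
      have h2 : ∑ i ∈ Sᶜ, Real.sqrt (∑ j ∈ B i, w j ^ 2)
          = ∑ i ∈ Sᶜ, Real.sqrt (∑ j ∈ B i, v j ^ 2) :=
        Finset.sum_congr rfl fun i hi => by
          congr 1
          exact Finset.sum_congr rfl fun j hj => by
            simp only [hwdef, Pi.sub_apply, hx_out i hi j hj]; ring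
      rw [h1, h2, zero_add]
    rw [hbx, hbw] at key
    exact key
  · -- NSP → recovery
    intro H x hxs w hAw hwx
    set v : Fin n → ℝ := w - x with hvdef
    have hAv : A.mulVec v = 0 := by
      rw [hvdef, Matrix.mulVec_sub, hAw, sub_self]
    have hv0 : v ≠ 0 := sub_ne_zero_of_ne hwx
    have hfin : {i : Fin M | ∃ j ∈ B i, x j ≠ 0}.Finite := Set.toFinite _
    set S : Finset (Fin M) := hfin.toFinset with hSdef
    have hScard : S.card ≤ s := by
      rw [hSdef, ← Set.ncard_eq_toFinset_card _ hfin]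
      exact hxs
    have hlt := H v hAv hv0 S hScard
    have hx_out : ∀ i ∈ Sᶜ, ∀ j ∈ B i, x j = 0 := by
      intro i hi j hj
      by_contra h
      exact (Finset.mem_compl.mp hi) (by rw [hSdef]; exact hfin.mem_toFinset.mpr ⟨j, hj, h⟩)
    -- blockNorm x = ∑ over S of f x
    have hbx : blockNorm B x = ∑ i ∈ S, Real.sqrt (∑ j ∈ B i, x j ^ 2) := by
      rw [blockNorm, ← Finset.sum_add_sum_compl S]
      have h2 : ∑ i ∈ Sᶜ, Real.sqrt (∑ j ∈ B i, x j ^ 2) = 0 := by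
        refine Finset.sum_eq_zero fun i hi => ?_
        have : ∑ j ∈ B i, x j ^ 2 = 0 :=
          Finset.sum_eq_zero fun j hj => by rw [hx_out i hi j hj]; ring
        rw [this, Real.sqrt_zero]
      rw [h2, add_zero]
    have htri : ∀ i, Real.sqrt (∑ j ∈ B i, x j ^ 2) ≤
        Real.sqrt (∑ j ∈ B i, w j ^ 2) + Real.sqrt (∑ j ∈ B i, v j ^ 2) := by
      intro i
      have := sqrt_sum_sq_add_le (B i) w (fun j => -v j)
      have hx : ∀ j, x j = w j + (-v j) := by
        intro j; simp [hvdef]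
      calc Real.sqrt (∑ j ∈ B i, x j ^ 2)
          = Real.sqrt (∑ j ∈ B i, (w j + (-v j)) ^ 2) := by
            congr 1; exact Finset.sum_congr rfl fun j _ => by rw [hx j]
        _ ≤ Real.sqrt (∑ j ∈ B i, w j ^ 2) + Real.sqrt (∑ j ∈ B i, (-v j) ^ 2) := this
        _ = Real.sqrt (∑ j ∈ B i, w j ^ 2) + Real.sqrt (∑ j ∈ B i, v j ^ 2) := by
            congr 2; exact Finset.sum_congr rfl fun j _ => by ring
    have hwv_out : ∀ i ∈ Sᶜ, Real.sqrt (∑ j ∈ B i, w j ^ 2)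
        = Real.sqrt (∑ j ∈ B i, v j ^ 2) := by
      intro i hi
      congr 1
      refine Finset.sum_congr rfl fun j hj => ?_
      have : v j = w j - x j := by simp [hvdef]
      rw [this, hx_out i hi j hj, sub_zero]
    calc blockNorm B x = ∑ i ∈ S, Real.sqrt (∑ j ∈ B i, x j ^ 2) := hbx
      _ ≤ ∑ i ∈ S, (Real.sqrt (∑ j ∈ B i, w j ^ 2) + Real.sqrt (∑ j ∈ B i, v j ^ 2)) :=
          Finset.sum_le_sum fun i _ => htri i
      _ = ∑ i ∈ S, Real.sqrt (∑ j ∈ B i, w j ^ 2) + ∑ i ∈ S, Real.sqrt (∑ j ∈ B i, v j ^ 2) :=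
          Finset.sum_add_distrib
      _ < ∑ i ∈ S, Real.sqrt (∑ j ∈ B i, w j ^ 2) + ∑ i ∈ Sᶜ, Real.sqrt (∑ j ∈ B i, v j ^ 2) :=
          by linarith
      _ = ∑ i ∈ S, Real.sqrt (∑ j ∈ B i, w j ^ 2) + ∑ i ∈ Sᶜ, Real.sqrt (∑ j ∈ B i, w j ^ 2) :=
          by rw [Finset.sum_congr rfl hwv_out]
      _ = blockNorm B w := by rw [blockNorm, ← Finset.sum_add_sum_compl S]
end
end

section
/- Let A₁,...,A_K ∈ ℝ^{L×n} satisfy the block null space property (BNSP) of order s, let x* ∈ ℝⁿ be s-sparse, and set y_j = A_j x* for j = 1,...,K. Then X* = (x*, x*, ..., x*) ∈ ℝ^{n×K} is the unique minimizer of ‖X‖_{1,2} over {X ∈ ℝ^{n×K} : A_j x_j = y_j for all j}, and consequently the average of the columns of any minimizer equals x*. -/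
noncomputable section

/-- The mixed ℓ_{1,2} norm of a matrix: sum of the ℓ₂ norms of its rows. -/
def rowNorm12 {n K : ℕ} (X : Matrix (Fin n) (Fin K) ℝ) : ℝ :=
  ∑ i, Real.sqrt (∑ j, X i j ^ 2)

/-- `X` is `s`-row sparse: at most `s` of its rows are nonzero. -/
def RowSparse {n K : ℕ} (s : ℕ) (X : Matrix (Fin n) (Fin K) ℝ) : Prop :=
  {i : Fin n | ∃ j, X i j ≠ 0}.ncard ≤ s

/-- The block null space property (BNSP) of order `s` for matrices `A₁,...,A_K`. -/
def BNSP {L n K : ℕ} (A : Fin K → Matrix (Fin L) (Fin n) ℝ) (s : ℕ) : Prop :=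
  ∀ V : Matrix (Fin n) (Fin K) ℝ,
    (∀ j, (A j).mulVec (fun i => V i j) = 0) → V ≠ 0 →
    ∀ S : Finset (Fin n), S.card ≤ s →
      ∑ i ∈ S, Real.sqrt (∑ j, V i j ^ 2) < ∑ i ∈ Sᶜ, Real.sqrt (∑ j, V i j ^ 2)

/-- A vector is `s`-sparse if it has at most `s` nonzero entries. -/
def Sparse {n : ℕ} (s : ℕ) (v : Fin n → ℝ) : Prop := {i : Fin n | v i ≠ 0}.ncard ≤ s

/-- Row euclidean norm helper. -/
def rnorm {K : ℕ} (v : Fin K → ℝ) : ℝ := Real.sqrt (∑ j, v j ^ 2)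

lemma rnorm_eq {K : ℕ} (v : Fin K → ℝ) :
    rnorm v = ‖(WithLp.equiv 2 (Fin K → ℝ)).symm v‖ := by
  rw [EuclideanSpace.norm_eq]
  simp [rnorm, Real.norm_eq_abs, sq_abs]

lemma rnorm_sub_le {K : ℕ} (u v : Fin K → ℝ) :
    rnorm (fun j => u j - v j) ≤ rnorm u + rnorm v := by
  rw [rnorm_eq, rnorm_eq, rnorm_eq]
  have h : (WithLp.equiv 2 (Fin K → ℝ)).symm (fun j => u j - v j)
      = (WithLp.equiv 2 (Fin K → ℝ)).symm u - (WithLp.equiv 2 (Fin K → ℝ)).symm v := rfl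
  rw [h]
  exact norm_sub_le _ _

lemma rnorm_zero {K : ℕ} : rnorm (fun _ : Fin K => (0 : ℝ)) = 0 := by
  simp [rnorm]

theorem stmt5 {L n K : ℕ} (hK : 0 < K) (A : Fin K → Matrix (Fin L) (Fin n) ℝ) (s : ℕ)
    (hBNSP : BNSP A s) (xstar : Fin n → ℝ) (hxs : Sparse s xstar)
    (y : Fin K → Fin L → ℝ) (hy : ∀ j, y j = (A j).mulVec xstar) :
    (∀ X : Matrix (Fin n) (Fin K) ℝ,
      (∀ j, (A j).mulVec (fun i => X i j) = y j) →
      X ≠ Matrix.of (fun i (_ : Fin K) => xstar i) →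
      rowNorm12 (Matrix.of fun i (_ : Fin K) => xstar i) < rowNorm12 X)
    ∧
    (∀ X : Matrix (Fin n) (Fin K) ℝ,
      (∀ j, (A j).mulVec (fun i => X i j) = y j) →
      (∀ W : Matrix (Fin n) (Fin K) ℝ, (∀ j, (A j).mulVec (fun i => W i j) = y j) →
        rowNorm12 X ≤ rowNorm12 W) →
      (fun i => (K : ℝ)⁻¹ * ∑ j, X i j) = xstar) := by
  set Xs : Matrix (Fin n) (Fin K) ℝ := Matrix.of (fun i (_ : Fin K) => xstar i) with hXs
  set S : Finset (Fin n) := Finset.univ.filter (fun i => xstar i ≠ 0) with hS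
  have hScard : S.card ≤ s := by
    have hset : {i : Fin n | xstar i ≠ 0} = (↑S : Set (Fin n)) := by
      ext i; simp [hS]
    have := hxs
    rw [Sparse, hset, Set.ncard_coe_finset] at this
    exact this
  have h1 : ∀ X : Matrix (Fin n) (Fin K) ℝ,
      (∀ j, (A j).mulVec (fun i => X i j) = y j) → X ≠ Xs →
      rowNorm12 Xs < rowNorm12 X := by
    intro X hfeas hne
    set V : Matrix (Fin n) (Fin K) ℝ := X - Xs with hV
    have hVne : V ≠ 0 := sub_ne_zero.mpr hne
    have hVnull : ∀ j, (A j).mulVec (fun i => V i j) = 0 := by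
      intro j
      have heq : (fun i => V i j) = (fun i => X i j) - xstar := by
        funext i; simp [hV, hXs, Matrix.sub_apply]
      rw [heq, Matrix.mulVec_sub, hfeas j, hy j, sub_self]
    have hb := hBNSP V hVnull hVne S hScard
    -- rewrite BNSP conclusion in terms of rnorm
    have hb' : ∑ i ∈ S, rnorm (fun j => V i j) < ∑ i ∈ Sᶜ, rnorm (fun j => V i j) := hb
    have hXsplit : rowNorm12 X
        = ∑ i ∈ S, rnorm (fun j => X i j) + ∑ i ∈ Sᶜ, rnorm (fun j => X i j) := by
      rw [rowNorm12, ← Finset.sum_add_sum_compl S]; rfl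
    have hXsSplit : rowNorm12 Xs = ∑ i ∈ S, rnorm (fun j => Xs i j) := by
      unfold rowNorm12 rnorm
      rw [← Finset.sum_add_sum_compl S]
      have h0 : ∑ i ∈ Sᶜ, Real.sqrt (∑ j, Xs i j ^ 2) = 0 := by
        apply Finset.sum_eq_zero
        intro i hi
        have hx0 : xstar i = 0 := by
          by_contra h
          exact (Finset.mem_compl.mp hi) (by simp [hS, h])
        simp [hXs, hx0]
      rw [h0, add_zero]
    have hcompl : ∀ i ∈ Sᶜ, rnorm (fun j => X i j) = rnorm (fun j => V i j) := by
      intro i hi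
      have hx0 : xstar i = 0 := by
        by_contra h
        exact (Finset.mem_compl.mp hi) (by simp [hS, h])
      have : (fun j => X i j) = (fun j => V i j) := by
        funext j; simp [hV, hXs, Matrix.sub_apply, hx0]
      rw [this]
    have htri : ∀ i, rnorm (fun j => Xs i j) ≤ rnorm (fun j => X i j) + rnorm (fun j => V i j) := by
      intro i
      have : (fun j => Xs i j) = (fun j => X i j - V i j) := by
        funext j; simp [hV, Matrix.sub_apply]
      rw [this]
      exact rnorm_sub_le _ _
    calc rowNorm12 Xs = ∑ i ∈ S, rnorm (fun j => Xs i j) := hXsSplit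
      _ ≤ ∑ i ∈ S, (rnorm (fun j => X i j) + rnorm (fun j => V i j)) :=
          Finset.sum_le_sum fun i _ => htri i
      _ = ∑ i ∈ S, rnorm (fun j => X i j) + ∑ i ∈ S, rnorm (fun j => V i j) :=
          Finset.sum_add_distrib
      _ < ∑ i ∈ S, rnorm (fun j => X i j) + ∑ i ∈ Sᶜ, rnorm (fun j => V i j) := by
          linarith
      _ = ∑ i ∈ S, rnorm (fun j => X i j) + ∑ i ∈ Sᶜ, rnorm (fun j => X i j) := by
          rw [Finset.sum_congr rfl hcompl]
      _ = rowNorm12 X := hXsplit.symm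
  refine ⟨h1, ?_⟩
  intro X hfeas hmin
  have hXsfeas : ∀ j, (A j).mulVec (fun i => Xs i j) = y j := by
    intro j
    have : (fun i => Xs i j) = xstar := by funext i; simp [hXs]
    rw [this, hy j]
  by_cases h : X = Xs
  · subst h
    funext i
    have hK' : (K : ℝ) ≠ 0 := Nat.cast_ne_zero.mpr hK.ne'
    show (K : ℝ)⁻¹ * ∑ _j : Fin K, xstar i = xstar i
    rw [Finset.sum_const, Finset.card_univ, Fintype.card_fin, nsmul_eq_mul,
      ← mul_assoc, inv_mul_cancel₀ hK', one_mul]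
  · exact absurd (hmin Xs hXsfeas) (not_le.mpr (h1 X hfeas h))
end
end

section
/- Let A₁,...,A_K ∈ ℝ^{L×n} and let A^J = blockdiag(A₁,...,A_K) ∈ ℝ^{LK×nK}, acting on stacked vectors v = (v₁;...;v_K) with v_j ∈ ℝⁿ by A^J v = (A₁v₁;...;A_K v_K). Call v s-row-block sparse if the matrix (v₁,...,v_K) ∈ ℝ^{n×K} has at most s nonzero rows. Then for every s ≤ n, the infimum of all δ ≥ 0 such that (1−δ)‖v‖₂² ≤ ‖A^J v‖₂² ≤ (1+δ)‖v‖₂² holds for every s-row-block sparse v ∈ ℝ^{nK} equals max_{j=1,...,K} of the infimum of all δ ≥ 0 such that (1−δ)‖w‖₂² ≤ ‖A_j w‖₂² ≤ (1+δ)‖w‖₂² holds for every s-sparse w ∈ ℝⁿ. -/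
noncomputable section

/-- The ℓ₂ norm of a finitely-indexed real vector. -/
def l2 {ι : Type*} [Fintype ι] (v : ι → ℝ) : ℝ := Real.sqrt (∑ i, v i ^ 2)

/-- The ℓ₁ norm of a finitely-indexed real vector. -/
def l1 {ι : Type*} [Fintype ι] (v : ι → ℝ) : ℝ := ∑ i, |v i|

/-- `A` satisfies the RIP inequality of order `t` with constant `δ`. -/
def RIP {m n : ℕ} (t : ℕ) (δ : ℝ) (A : Matrix (Fin m) (Fin n) ℝ) : Prop :=
  ∀ v : Fin n → ℝ, Sparse t v →
    (1 - δ) * l2 v ^ 2 ≤ l2 (A.mulVec v) ^ 2 ∧ l2 (A.mulVec v) ^ 2 ≤ (1 + δ) * l2 v ^ 2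

def C0 (δ : ℝ) : ℝ := 2 * (1 - (1 - Real.sqrt 2) * δ) / (1 - (1 + Real.sqrt 2) * δ)

def C1 (δ : ℝ) : ℝ := 4 * Real.sqrt (1 + δ) / (1 - (1 + Real.sqrt 2) * δ)

/-! ### Auxiliary machinery -/

lemma l2_sq {ι : Type*} [Fintype ι] (v : ι → ℝ) : l2 v ^ 2 = ∑ i, v i ^ 2 :=
  Real.sq_sqrt (Finset.sum_nonneg fun _ _ => sq_nonneg _)

/-- Frobenius bound: `‖A w‖² ≤ (∑ A²) ‖w‖²`. -/
lemma frob_bound {L n : ℕ} (A : Matrix (Fin L) (Fin n) ℝ) (w : Fin n → ℝ) :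
    l2 (A.mulVec w) ^ 2 ≤ (∑ l, ∑ i, A l i ^ 2) * l2 w ^ 2 := by
  rw [l2_sq, l2_sq, Finset.sum_mul]
  apply Finset.sum_le_sum
  intro l _
  have := Finset.sum_mul_sq_le_sq_mul_sq Finset.univ (fun i => A l i) w
  simpa [Matrix.mulVec, dotProduct] using this

/-- The generic "RIP constant" set. -/
def Tset {ι : Type*} (P : ι → Prop) (a b : ι → ℝ) : Set ℝ :=
  {δ : ℝ | 0 ≤ δ ∧ ∀ v, P v → (1 - δ) * a v ≤ b v ∧ b v ≤ (1 + δ) * a v}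

lemma Tset_bddBelow {ι : Type*} (P : ι → Prop) (a b : ι → ℝ) : BddBelow (Tset P a b) :=
  ⟨0, fun _ hδ => hδ.1⟩

lemma Tset_upward {ι : Type*} {P : ι → Prop} {a b : ι → ℝ} (ha : ∀ v, 0 ≤ a v)
    {δ δ' : ℝ} (hδ : δ ∈ Tset P a b) (h : δ ≤ δ') : δ' ∈ Tset P a b := by
  refine ⟨hδ.1.trans h, fun v hv => ?_⟩
  obtain ⟨h1, h2⟩ := hδ.2 v hv
  constructor
  · exact le_trans (mul_le_mul_of_nonneg_right (by linarith) (ha v)) h1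
  · exact h2.trans (mul_le_mul_of_nonneg_right (by linarith) (ha v))

lemma Tset_closed {ι : Type*} (P : ι → Prop) (a b : ι → ℝ) : IsClosed (Tset P a b) := by
  have : Tset P a b = {δ : ℝ | 0 ≤ δ} ∩
      ⋂ (v : ι) (_ : P v),
        ({δ : ℝ | (1 - δ) * a v ≤ b v} ∩ {δ : ℝ | b v ≤ (1 + δ) * a v}) := by
    ext δ
    simp only [Tset, Set.mem_setOf_eq, Set.mem_inter_iff, Set.mem_iInter]
    try tauto
  rw [this]
  apply IsClosed.inter
  · exact isClosed_le continuous_const continuous_id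
  · apply isClosed_iInter; intro v
    apply isClosed_iInter; intro _
    exact (isClosed_le (by continuity) continuous_const).inter
      (isClosed_le continuous_const (by continuity))

lemma Tset_nonempty {ι : Type*} {P : ι → Prop} {a b : ι → ℝ} (ha : ∀ v, 0 ≤ a v)
    (hb : ∀ v, P v → 0 ≤ b v) {C : ℝ} (hC : ∀ v, P v → b v ≤ C * a v) :
    (Tset P a b).Nonempty := by
  refine ⟨1 + max C 0, by positivity, fun v hv => ?_⟩
  constructor
  · have : (1 - (1 + max C 0)) * a v ≤ 0 := by
      apply mul_nonpos_of_nonpos_of_nonneg _ (ha v)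
      have := le_max_right C 0; linarith
    exact this.trans (hb v hv)
  · refine (hC v hv).trans (mul_le_mul_of_nonneg_right ?_ (ha v))
    have := le_max_left C 0; have := le_max_right C 0; linarith

lemma Tset_csInf_mem {ι : Type*} {P : ι → Prop} {a b : ι → ℝ}
    (hne : (Tset P a b).Nonempty) : sInf (Tset P a b) ∈ Tset P a b :=
  (Tset_closed P a b).csInf_mem hne (Tset_bddBelow P a b)

theorem stmt6 {L n K : ℕ} (hK : 0 < K) (A : Fin K → Matrix (Fin L) (Fin n) ℝ)
    (s : ℕ) (hs : s ≤ n) :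
    sInf {δ : ℝ | 0 ≤ δ ∧ ∀ v : Fin K → Fin n → ℝ,
        {i : Fin n | ∃ j, v j i ≠ 0}.ncard ≤ s →
        (1 - δ) * (∑ j, ∑ i, v j i ^ 2) ≤ (∑ j, l2 ((A j).mulVec (v j)) ^ 2) ∧
        (∑ j, l2 ((A j).mulVec (v j)) ^ 2) ≤ (1 + δ) * (∑ j, ∑ i, v j i ^ 2)}
    = ⨆ j : Fin K, sInf {δ : ℝ | 0 ≤ δ ∧ ∀ w : Fin n → ℝ, Sparse s w →
        (1 - δ) * l2 w ^ 2 ≤ l2 ((A j).mulVec w) ^ 2 ∧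
        l2 ((A j).mulVec w) ^ 2 ≤ (1 + δ) * l2 w ^ 2} := by
  haveI : Nonempty (Fin K) := ⟨⟨0, hK⟩⟩
  set PJ : (Fin K → Fin n → ℝ) → Prop := fun v => {i : Fin n | ∃ j, v j i ≠ 0}.ncard ≤ s with hPJ
  set aJ : (Fin K → Fin n → ℝ) → ℝ := fun v => ∑ j, ∑ i, v j i ^ 2 with haJ
  set bJ : (Fin K → Fin n → ℝ) → ℝ := fun v => ∑ j, l2 ((A j).mulVec (v j)) ^ 2 with hbJ
  have haJ0 : ∀ v, 0 ≤ aJ v := fun v =>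
    Finset.sum_nonneg fun _ _ => Finset.sum_nonneg fun _ _ => sq_nonneg _
  have ha0 : ∀ w : Fin n → ℝ, 0 ≤ l2 w ^ 2 := fun w => sq_nonneg _
  -- rewrite the two kinds of sets as `Tset`s
  have hTJ : {δ : ℝ | 0 ≤ δ ∧ ∀ v : Fin K → Fin n → ℝ,
        {i : Fin n | ∃ j, v j i ≠ 0}.ncard ≤ s →
        (1 - δ) * (∑ j, ∑ i, v j i ^ 2) ≤ (∑ j, l2 ((A j).mulVec (v j)) ^ 2) ∧
        (∑ j, l2 ((A j).mulVec (v j)) ^ 2) ≤ (1 + δ) * (∑ j, ∑ i, v j i ^ 2)}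
      = Tset PJ aJ bJ := rfl
  have hTj : ∀ j : Fin K, {δ : ℝ | 0 ≤ δ ∧ ∀ w : Fin n → ℝ, Sparse s w →
        (1 - δ) * l2 w ^ 2 ≤ l2 ((A j).mulVec w) ^ 2 ∧
        l2 ((A j).mulVec w) ^ 2 ≤ (1 + δ) * l2 w ^ 2}
      = Tset (Sparse s) (fun w => l2 w ^ 2) (fun w => l2 ((A j).mulVec w) ^ 2) := fun _ => rfl
  rw [hTJ]
  simp only [hTj]
  set T : Fin K → Set ℝ :=
    fun j => Tset (Sparse s) (fun w => l2 w ^ 2) (fun w => l2 ((A j).mulVec w) ^ 2) with hT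
  -- nonemptiness
  have hTjne : ∀ j, (T j).Nonempty := by
    intro j
    exact Tset_nonempty ha0 (fun w _ => sq_nonneg _) (fun w _ => frob_bound (A j) w)
  have hTJne : (Tset PJ aJ bJ).Nonempty := by
    refine Tset_nonempty haJ0 (fun v _ => Finset.sum_nonneg fun _ _ => sq_nonneg _)
      (C := ∑ j, ∑ l, ∑ i, (A j) l i ^ 2) (fun v _ => ?_)
    have key : ∀ j : Fin K, l2 ((A j).mulVec (v j)) ^ 2
        ≤ (∑ j', ∑ l, ∑ i, (A j') l i ^ 2) * ∑ i, v j i ^ 2 := by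
      intro j
      refine (frob_bound (A j) (v j)).trans ?_
      rw [l2_sq]
      apply mul_le_mul_of_nonneg_right _ (Finset.sum_nonneg fun _ _ => sq_nonneg _)
      exact Finset.single_le_sum
        (f := fun j' => ∑ l, ∑ i, (A j') l i ^ 2)
        (fun _ _ => Finset.sum_nonneg fun _ _ => Finset.sum_nonneg fun _ _ => sq_nonneg _)
        (Finset.mem_univ j)
    calc bJ v ≤ ∑ j, (∑ j', ∑ l, ∑ i, (A j') l i ^ 2) * ∑ i, v j i ^ 2 :=
          Finset.sum_le_sum fun j _ => key j
      _ = (∑ j', ∑ l, ∑ i, (A j') l i ^ 2) * aJ v := by rw [haJ, Finset.mul_sum]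
  -- sup of the per-block infima
  set δs : ℝ := ⨆ j, sInf (T j) with hδs
  have hbdd : BddAbove (Set.range fun j => sInf (T j)) := Set.Finite.bddAbove (Set.finite_range _)
  have hle : ∀ j, sInf (T j) ≤ δs := fun j => le_ciSup hbdd j
  have hmem : ∀ j, δs ∈ T j := fun j =>
    Tset_upward ha0 (Tset_csInf_mem (hTjne j)) (hle j)
  apply le_antisymm
  · -- sInf TJ ≤ δs since δs ∈ TJ
    refine csInf_le (Tset_bddBelow _ _ _) ?_
    refine ⟨(Tset_csInf_mem (hTjne ⟨0, hK⟩)).1.trans (hle ⟨0, hK⟩), fun v hv => ?_⟩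
    have hsp : ∀ j, Sparse s (v j) := by
      intro j
      refine le_trans (Set.ncard_le_ncard ?_ (Set.toFinite _)) hv
      intro i hi
      exact ⟨j, hi⟩
    have h1 : ∀ j : Fin K, (1 - δs) * l2 (v j) ^ 2 ≤ l2 ((A j).mulVec (v j)) ^ 2 ∧
        l2 ((A j).mulVec (v j)) ^ 2 ≤ (1 + δs) * l2 (v j) ^ 2 :=
      fun j => (hmem j).2 (v j) (hsp j)
    constructor
    · calc (1 - δs) * aJ v = ∑ j, (1 - δs) * l2 (v j) ^ 2 := by
            rw [haJ, Finset.mul_sum]; simp [l2_sq]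
        _ ≤ bJ v := Finset.sum_le_sum fun j _ => (h1 j).1
    · calc bJ v ≤ ∑ j, (1 + δs) * l2 (v j) ^ 2 := Finset.sum_le_sum fun j _ => (h1 j).2
        _ = (1 + δs) * aJ v := by rw [haJ, Finset.mul_sum]; simp [l2_sq]
  · -- δs ≤ sInf TJ : each sInf (T j) ≤ sInf TJ since TJ ⊆ T j
    refine ciSup_le fun j => ?_
    refine csInf_le_csInf (Tset_bddBelow _ _ _) hTJne ?_
    intro δ hδ
    refine ⟨hδ.1, fun w hw => ?_⟩
    set v : Fin K → Fin n → ℝ := Pi.single j w with hv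
    have hvs : {i : Fin n | ∃ j', v j' i ≠ 0}.ncard ≤ s := by
      have : {i : Fin n | ∃ j', v j' i ≠ 0} = {i : Fin n | w i ≠ 0} := by
        ext i
        simp only [hv, Set.mem_setOf_eq, Pi.single_apply]
        constructor
        · rintro ⟨j', hj'⟩
          by_cases h : j' = j
          · simpa [h] using hj'
          · simp [h] at hj'
        · intro h; exact ⟨j, by simpa using h⟩
      rw [this]; exact hw
    have := hδ.2 v hvs
    have hav : aJ v = l2 w ^ 2 := by
      show (∑ j' : Fin K, ∑ i, v j' i ^ 2) = l2 w ^ 2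
      rw [l2_sq, Fintype.sum_eq_single j]
      · simp [hv]
      · intro j' hj'
        simp [hv, Pi.single_apply, hj']
    have hbv : bJ v = l2 ((A j).mulVec w) ^ 2 := by
      show (∑ j' : Fin K, l2 ((A j').mulVec (v j')) ^ 2) = l2 ((A j).mulVec w) ^ 2
      rw [Fintype.sum_eq_single j]
      · simp [hv]
      · intro j' hj'
        have : v j' = 0 := by
          ext i; simp [hv, Pi.single_apply, hj']
        simp [this, Matrix.mulVec_zero, l2, Real.sqrt_zero]
    rw [hav, hbv] at this
    exact this
end
end

section
/- Let A₁,...,A_K ∈ ℝ^{L×n}, y₁,...,y_K ∈ ℝ^L, and suppose x* ∈ ℝⁿ is, for every j = 1,...,K, a minimizer of ‖x‖₁ over {x ∈ ℝⁿ : A_j x = y_j}. Then every X = (x₁,...,x_K) ∈ ℝ^{n×K} with A_j x_j = y_j for all j satisfies ‖X‖_{1,2} ≥ √K ‖x*‖₁, and the matrix X* = (x*, x*, ..., x*) is feasible and attains equality: ‖X*‖_{1,2} = √K ‖x*‖₁. -/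
noncomputable section

lemma l1_le_sqrt_mul {K : ℕ} (v : Fin K → ℝ) :
    ∑ j, |v j| ≤ Real.sqrt K * Real.sqrt (∑ j, v j ^ 2) := by
  have h1 : (∑ j, |v j|) ^ 2 ≤ (K : ℝ) * ∑ j, v j ^ 2 := by
    have := sq_sum_le_card_mul_sum_sq (s := Finset.univ) (f := fun j => |v j|)
    simpa [sq_abs] using this
  calc ∑ j, |v j| = Real.sqrt ((∑ j, |v j|) ^ 2) := by
        rw [Real.sqrt_sq (by positivity)]
    _ ≤ Real.sqrt ((K : ℝ) * ∑ j, v j ^ 2) := Real.sqrt_le_sqrt h1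
    _ = Real.sqrt K * Real.sqrt (∑ j, v j ^ 2) := Real.sqrt_mul (by positivity) _

theorem stmt14 {L n K : ℕ} (A : Fin K → Matrix (Fin L) (Fin n) ℝ)
    (y : Fin K → Fin L → ℝ) (xstar : Fin n → ℝ)
    (hfeas : ∀ j, (A j).mulVec xstar = y j)
    (hmin : ∀ j, ∀ w : Fin n → ℝ, (A j).mulVec w = y j → l1 xstar ≤ l1 w) :
    (∀ X : Matrix (Fin n) (Fin K) ℝ,
      (∀ j, (A j).mulVec (fun i => X i j) = y j) →
      Real.sqrt (K : ℝ) * l1 xstar ≤ rowNorm12 X)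
    ∧ rowNorm12 (Matrix.of fun i (_ : Fin K) => xstar i) = Real.sqrt (K : ℝ) * l1 xstar := by
  constructor
  · intro X hX
    rcases Nat.eq_zero_or_pos K with hK | hK
    · subst hK
      simp only [Nat.cast_zero, Real.sqrt_zero, zero_mul]
      unfold rowNorm12
      positivity
    have hsq : (0 : ℝ) < Real.sqrt K := Real.sqrt_pos.mpr (by positivity)
    rw [← mul_le_mul_iff_right₀ hsq]
    have key : Real.sqrt K * rowNorm12 X ≥ ∑ i, ∑ j, |X i j| := by
      unfold rowNorm12
      rw [Finset.mul_sum]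
      exact Finset.sum_le_sum fun i _ => l1_le_sqrt_mul (fun j => X i j)
    have hsum : (K : ℝ) * l1 xstar ≤ ∑ i, ∑ j, |X i j| := by
      rw [Finset.sum_comm]
      calc (K : ℝ) * l1 xstar = ∑ _j : Fin K, l1 xstar := by
            simp [Finset.sum_const, mul_comm]
        _ ≤ ∑ j, l1 (fun i => X i j) :=
            Finset.sum_le_sum fun j _ => hmin j _ (hX j)
        _ = ∑ j, ∑ i, |X i j| := rfl
    calc Real.sqrt K * (Real.sqrt K * l1 xstar)
        = (K : ℝ) * l1 xstar := by
          rw [← mul_assoc, Real.mul_self_sqrt (by positivity)]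
      _ ≤ ∑ i, ∑ j, |X i j| := hsum
      _ ≤ Real.sqrt K * rowNorm12 X := key
  · unfold rowNorm12 l1
    rw [Finset.mul_sum]
    refine Finset.sum_congr rfl fun i _ => ?_
    have : ∑ _j : Fin K, (xstar i) ^ 2 = (K : ℝ) * (xstar i) ^ 2 := by
      simp [mul_comm]
    simp only [Matrix.of_apply, this]
    rw [Real.sqrt_mul (by positivity), Real.sqrt_sq_eq_abs]
end
end
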